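/- For every integer k >= 4, one has 2/(k^2 - 1) + ((k-2)/(k+1)) * sum_{i=1}^{k} 1/C(k,i) < 1, where C(k,i) is the binomial coefficient. -/
import Mathlib

lemma choose_mono_half {n a b : ℕ} (hab : a ≤ b) (hb : b ≤ n / 2) :
    n.choose a ≤ n.choose b := by
  induction b, hab using Nat.le_induction with
  | base => exact le_rfl
  | succ b hab ih =>
      exact (ih (le_trans (Nat.le_succ b) hb)).trans
        (Nat.choose_le_succ_of_lt_half_left hb)

lemma choose_three_le {k i : ℕ} (h3 : 3 ≤ i) (h3' : i ≤ k - 3) (hk : 6 ≤ k) :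
    k.choose 3 ≤ k.choose i := by
  rcases le_or_gt i (k / 2) with h | h
  · exact choose_mono_half h3 h
  · have hik : i ≤ k := le_trans h3' (Nat.sub_le k 3)
    rw [← Nat.choose_symm hik]
    exact choose_mono_half (by omega) (by omega)

theorem stmt_7 (k : ℕ) (hk : 4 ≤ k) :
    2 / ((k : ℝ) ^ 2 - 1) + (((k : ℝ) - 2) / ((k : ℝ) + 1)) *
      ∑ i ∈ Finset.Icc 1 k, (1 : ℝ) / (Nat.choose k i) < 1 := by
  rcases lt_or_ge k 6 with hk6 | hk6
  · interval_cases k <;> norm_num [show Finset.Icc 1 4 = {1,2,3,4} from rfl,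
      show Finset.Icc 1 5 = {1,2,3,4,5} from rfl, Finset.sum_insert,
      show Nat.choose 4 2 = 6 from rfl, show Nat.choose 5 2 = 10 from rfl,
      show Nat.choose 5 3 = 10 from rfl]
  -- general case k ≥ 6
  set x : ℝ := (k : ℝ) with hx
  have hx6 : (6 : ℝ) ≤ x := by rw [hx]; exact_mod_cast hk6
  have hx0 : (0 : ℝ) < x := by linarith
  have hx1 : (0 : ℝ) < x - 1 := by linarith
  have hx2 : (0 : ℝ) < x - 2 := by linarith
  have hxp1 : (0 : ℝ) < x + 1 := by linarith
  -- value of choose 2 and choose 3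
  have hc2 : ((k.choose 2 : ℕ) : ℝ) = x * (x - 1) / 2 := Nat.cast_choose_two ℝ k
  have hc3 : ((k.choose 3 : ℕ) : ℝ) = x * (x - 1) * (x - 2) / 6 := by
    have h : k.descFactorial 3 = Nat.factorial 3 * k.choose 3 :=
      Nat.descFactorial_eq_factorial_mul_choose k 3
    have hd : k.descFactorial 3 = (k - 2) * ((k - 1) * k) := by
      show (k - 2) * k.descFactorial 2 = _
      show (k - 2) * ((k - 1) * k.descFactorial 1) = _
      show (k - 2) * ((k - 1) * ((k - 0) * k.descFactorial 0)) = _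
      simp [Nat.descFactorial]
    have h' : (6 : ℕ) * k.choose 3 = (k - 2) * ((k - 1) * k) := by
      rw [← hd, h]; norm_num [Nat.factorial]
    have h2 := congrArg (fun n : ℕ => (n : ℝ)) h'
    push_cast [Nat.cast_sub (by omega : 1 ≤ k), Nat.cast_sub (by omega : 2 ≤ k)] at h2
    rw [eq_div_iff (by norm_num : (6:ℝ) ≠ 0)]
    rw [← hx] at h2
    linear_combination h2
  -- split the sum
  have hsplit : Finset.Icc 1 k =
      insert k (insert 1 (insert (k-1) (insert 2 (insert (k-2) (Finset.Icc 3 (k-3)))))) := by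
    ext i
    simp only [Finset.mem_Icc, Finset.mem_insert]
    omega
  have hck1 : k.choose (k - 1) = k := by
    rw [Nat.choose_symm (by omega : 1 ≤ k)]
    exact Nat.choose_one_right k
  have hck2 : k.choose (k - 2) = k.choose 2 := Nat.choose_symm (by omega)
  -- bound the middle sum
  have hmid : ∑ i ∈ Finset.Icc 3 (k-3), (1 : ℝ) / (Nat.choose k i)
      ≤ (k - 5 : ℕ) * (1 / (k.choose 3 : ℝ)) := by
    have := Finset.sum_le_card_nsmul (Finset.Icc 3 (k-3))
      (fun i => (1 : ℝ) / (Nat.choose k i)) (1 / (k.choose 3 : ℝ)) ?_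
    · simpa [Nat.card_Icc, show k - 3 + 1 - 3 = k - 5 by omega, nsmul_eq_mul] using this
    · intro i hi
      simp only [Finset.mem_Icc] at hi
      apply one_div_le_one_div_of_le
      · exact_mod_cast Nat.choose_pos (by omega : 3 ≤ k)
      · exact_mod_cast choose_three_le hi.1 hi.2 hk6
  -- compute/bound full sum
  have hsum : ∑ i ∈ Finset.Icc 1 k, (1 : ℝ) / (Nat.choose k i)
      ≤ 1 + 2 / x + 4 / (x * (x - 1)) + (x - 5) * (6 / (x * (x - 1) * (x - 2))) := by
    rw [hsplit]
    rw [Finset.sum_insert (by simp [Finset.mem_Icc]; omega),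
        Finset.sum_insert (by simp [Finset.mem_Icc]; omega),
        Finset.sum_insert (by simp [Finset.mem_Icc]; omega),
        Finset.sum_insert (by simp [Finset.mem_Icc]; omega),
        Finset.sum_insert (by simp [Finset.mem_Icc]; omega)]
    rw [Nat.choose_self, Nat.choose_one_right, hck1, hck2]
    have h5 : ((k - 5 : ℕ) : ℝ) ≤ x - 5 := by
      push_cast [Nat.cast_sub (by omega : 5 ≤ k)]; rw [← hx]
    have h6 : (0:ℝ) ≤ 1 / (k.choose 3 : ℝ) := by positivity
    have hmid' : ∑ i ∈ Finset.Icc 3 (k-3), (1 : ℝ) / (Nat.choose k i)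
        ≤ (x - 5) * (6 / (x * (x - 1) * (x - 2))) := by
      refine hmid.trans ?_
      rw [hc3]
      have : 1 / (x * (x - 1) * (x - 2) / 6) = 6 / (x * (x - 1) * (x - 2)) := by
        field_simp
      rw [this]
      apply mul_le_mul_of_nonneg_right h5 (by positivity)
    rw [hc2]
    have e2 : 1 / (x * (x - 1) / 2) = 2 / (x * (x - 1)) := by field_simp
    rw [e2, Nat.cast_one, ← hx]
    simp only [one_div] at hmid' ⊢
    ring_nf at hmid' ⊢
    linarith [hmid']
  -- final arithmetic
  have hcoef : (0 : ℝ) ≤ (x - 2) / (x + 1) := by positivity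
  have hsq : (0 : ℝ) < x ^ 2 - 1 := by nlinarith
  have hmain : 2 / (x ^ 2 - 1) + ((x - 2) / (x + 1)) *
      (1 + 2 / x + 4 / (x * (x - 1)) + (x - 5) * (6 / (x * (x - 1) * (x - 2)))) < 1 := by
    have hid : 1 - (2 / (x ^ 2 - 1) + ((x - 2) / (x + 1)) *
        (1 + 2 / x + 4 / (x * (x - 1)) + (x - 5) * (6 / (x * (x - 1) * (x - 2)))))
        = (x ^ 2 - 9 * x + 34) / (x * (x - 1) * (x + 1)) := by
      field_simp
      ring
    have hpos : 0 < (x ^ 2 - 9 * x + 34) / (x * (x - 1) * (x + 1)) := by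
      apply div_pos
      · nlinarith [sq_nonneg (2 * x - 9)]
      · positivity
    linarith
  calc 2 / (x ^ 2 - 1) + ((x - 2) / (x + 1)) * ∑ i ∈ Finset.Icc 1 k, (1 : ℝ) / (Nat.choose k i)
      ≤ 2 / (x ^ 2 - 1) + ((x - 2) / (x + 1)) *
        (1 + 2 / x + 4 / (x * (x - 1)) + (x - 5) * (6 / (x * (x - 1) * (x - 2)))) := by
        gcongr
    _ < 1 := hmain
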